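/- Let S be a nonnegative integrable random variable on a probability space with m := 1 − E[S] satisfying 0 < m < 1, fix T > 0 and let α ∈ [0,1). Then there exists x*(α) ≤ 0 with log((1−α)·m) < x*(α) ≤ log(1 − α·m) such that: for every x ≥ x*(α) there exists σ ∈ [0,∞) with C_BS(x,σ) = E[(S − e^x)₊] + α·m, while for every x < x*(α) no such σ ∈ [0,∞) exists. In other words, the implied volatility of the α-collateralised Call is well defined exactly on [x*(α), +∞). -/

import Mathlib

open MeasureTheory Filter

/-- Standard normal cumulative distribution function. -/
noncomputable def stdNormalCDF (y : ℝ) : ℝ :=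
  ∫ t in Set.Iic y, Real.exp (-t ^ 2 / 2) / Real.sqrt (2 * Real.pi)

/-- Black-Scholes d₊ (maturity `T`, log-strike `x`, volatility `σ`). -/
noncomputable def dplus (T x σ : ℝ) : ℝ := -x / (σ * Real.sqrt T) + σ * Real.sqrt T / 2

/-- Black-Scholes d₋ (maturity `T`, log-strike `x`, volatility `σ`). -/
noncomputable def dminus (T x σ : ℝ) : ℝ := -x / (σ * Real.sqrt T) - σ * Real.sqrt T / 2

/-- Black-Scholes Call price (maturity `T`, log-strike `x`, volatility `σ`),
with the convention `CBS T x 0 = max (1 - exp x) 0`. -/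
noncomputable def CBS (T x σ : ℝ) : ℝ :=
  if σ = 0 then max (1 - Real.exp x) 0
  else stdNormalCDF (dplus T x σ) - Real.exp x * stdNormalCDF (dminus T x σ)

/-- Black-Scholes Put price (maturity `T`, log-strike `x`, volatility `σ`),
with the convention `PBS T x 0 = max (exp x - 1) 0`. -/
noncomputable def PBS (T x σ : ℝ) : ℝ :=
  if σ = 0 then max (Real.exp x - 1) 0
  else Real.exp x * stdNormalCDF (-dminus T x σ) - stdNormalCDF (-dplus T x σ)

open Topology

noncomputable def gpdf (t : ℝ) : ℝ := Real.exp (-t ^ 2 / 2) / Real.sqrt (2 * Real.pi)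

lemma gpdf_pos (t : ℝ) : 0 < gpdf t :=
  div_pos (Real.exp_pos _) (Real.sqrt_pos.2 (by positivity))

lemma gpdf_integrable : Integrable gpdf := by
  have h : Integrable (fun t : ℝ => Real.exp (-(1/2) * t ^ 2)) :=
    integrable_exp_neg_mul_sq (by norm_num)
  have := h.div_const (Real.sqrt (2 * Real.pi))
  refine this.congr (Eventually.of_forall fun t => ?_)
  simp [gpdf]; ring_nf

lemma gpdf_total : ∫ t, gpdf t = 1 := by
  have h := integral_gaussian (1/2)
  have h2 : ∫ t : ℝ, Real.exp (-t ^ 2 / 2) = Real.sqrt (2 * Real.pi) := by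
    rw [show (Real.sqrt (2*Real.pi)) = Real.sqrt (Real.pi / (1/2)) by norm_num [mul_comm]]
    rw [← h]; congr 1; funext t; ring_nf
  have hs : Real.sqrt (2 * Real.pi) ≠ 0 := by positivity
  rw [show (fun t => gpdf t) = fun t => Real.exp (-t^2/2) / Real.sqrt (2*Real.pi) from rfl]
  rw [integral_div, h2, div_self hs]

lemma stdNormalCDF_eq (y : ℝ) : stdNormalCDF y = ∫ t in Set.Iic y, gpdf t := rfl

lemma stdNormalCDF_nonneg (y : ℝ) : 0 ≤ stdNormalCDF y :=
  setIntegral_nonneg measurableSet_Iic fun t _ => (gpdf_pos t).le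

lemma stdNormalCDF_le_one (y : ℝ) : stdNormalCDF y ≤ 1 := by
  rw [stdNormalCDF_eq, ← gpdf_total]
  exact setIntegral_le_integral gpdf_integrable (Eventually.of_forall fun t => (gpdf_pos t).le)

lemma stdNormalCDF_add_Ioi (y : ℝ) : stdNormalCDF y + ∫ t in Set.Ioi y, gpdf t = 1 := by
  rw [stdNormalCDF_eq, intervalIntegral.integral_Iic_add_Ioi gpdf_integrable.integrableOn
    gpdf_integrable.integrableOn, gpdf_total]

lemma stdNormalCDF_mono : Monotone stdNormalCDF := fun a b hab => by
  rw [stdNormalCDF_eq, stdNormalCDF_eq]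
  exact setIntegral_mono_set gpdf_integrable.integrableOn
    (Eventually.of_forall fun t => (gpdf_pos t).le)
    (HasSubset.Subset.eventuallyLE (Set.Iic_subset_Iic.2 hab))

lemma stdNormalCDF_decomp (y : ℝ) :
    stdNormalCDF y = (∫ t in Set.Iic (0:ℝ), gpdf t) + ∫ t in (0:ℝ)..y, gpdf t := by
  rw [stdNormalCDF_eq, ← intervalIntegral.integral_Iic_sub_Iic gpdf_integrable.integrableOn
    gpdf_integrable.integrableOn]; ring

lemma stdNormalCDF_continuous : Continuous stdNormalCDF := by
  have : Continuous fun y : ℝ => (∫ t in Set.Iic (0:ℝ), gpdf t) + ∫ t in (0:ℝ)..y, gpdf t :=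
    continuous_const.add (gpdf_integrable.continuous_primitive 0)
  exact this.congr fun y => (stdNormalCDF_decomp y).symm

lemma stdNormalCDF_tendsto_atTop : Tendsto stdNormalCDF atTop (𝓝 1) := by
  have h : Tendsto (fun y : ℝ => ∫ t in (0:ℝ)..y, gpdf t) atTop
      (𝓝 (∫ t in Set.Ioi (0:ℝ), gpdf t)) :=
    intervalIntegral_tendsto_integral_Ioi 0 gpdf_integrable.integrableOn tendsto_id
  have := (tendsto_const_nhds (x := ∫ t in Set.Iic (0:ℝ), gpdf t)).add h
  rw [show (∫ t in Set.Iic (0:ℝ), gpdf t) + (∫ t in Set.Ioi (0:ℝ), gpdf t) = 1 from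
    stdNormalCDF_add_Ioi 0] at this
  exact this.congr fun y => (stdNormalCDF_decomp y).symm

lemma stdNormalCDF_tendsto_atBot : Tendsto stdNormalCDF atBot (𝓝 0) := by
  have h : Tendsto (fun y : ℝ => ∫ t in y..(0:ℝ), gpdf t) atBot
      (𝓝 (∫ t in Set.Iic (0:ℝ), gpdf t)) :=
    intervalIntegral_tendsto_integral_Iic 0 gpdf_integrable.integrableOn tendsto_id
  have h2 := (tendsto_const_nhds (x := ∫ t in Set.Iic (0:ℝ), gpdf t)).sub h
  rw [sub_self] at h2
  refine h2.congr fun y => ?_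
  rw [stdNormalCDF_decomp y, intervalIntegral.integral_symm]; ring


lemma shift_Iic (f : ℝ → ℝ) (a s : ℝ) :
    ∫ t in Set.Iic a, f (t + s) = ∫ t in Set.Iic (a + s), f t := by
  rw [← integral_indicator measurableSet_Iic, ← integral_indicator measurableSet_Iic]
  rw [← integral_add_right_eq_self (fun t => Set.indicator (Set.Iic (a + s)) f t) s]
  congr 1; funext t
  by_cases h : t ≤ a
  · rw [Set.indicator_of_mem (by simpa using h),
      Set.indicator_of_mem (by simpa using add_le_add_right h s)]
  · rw [Set.indicator_of_notMem (by simpa using h),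
      Set.indicator_of_notMem (by simpa using h)]

lemma shift_Ioi (f : ℝ → ℝ) (a s : ℝ) :
    ∫ t in Set.Ioi a, f (t + s) = ∫ t in Set.Ioi (a + s), f t := by
  rw [← integral_indicator measurableSet_Ioi, ← integral_indicator measurableSet_Ioi]
  rw [← integral_add_right_eq_self (fun t => Set.indicator (Set.Ioi (a + s)) f t) s]
  congr 1; funext t
  by_cases h : a < t
  · rw [Set.indicator_of_mem (by simpa using h),
      Set.indicator_of_mem (by simpa using add_lt_add_right h s)]
  · rw [Set.indicator_of_notMem (by simpa using h),
      Set.indicator_of_notMem (by simpa using h)]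

lemma gpdf_shift (t s : ℝ) : gpdf (t + s) = gpdf t * Real.exp (-(t * s) - s ^ 2 / 2) := by
  unfold gpdf
  rw [div_mul_eq_mul_div, ← Real.exp_add]
  congr 2; ring

lemma CBS_pieces (T x σ : ℝ) (hT : 0 < T) (hσ : 0 < σ) :
    0 ≤ CBS T x σ ∧ 1 - Real.exp x ≤ CBS T x σ := by
  set s := σ * Real.sqrt T with hs_def
  have hs : 0 < s := mul_pos hσ (Real.sqrt_pos.2 hT)
  set d := dminus T x σ with hd_def
  have hdp : dplus T x σ = d + s := by
    simp only [hd_def, dplus, dminus, ← hs_def]; ring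
  have hx : x = -(d * s) - s ^ 2 / 2 := by
    simp only [hd_def, dminus, ← hs_def]
    field_simp
    ring
  have hCBS : CBS T x σ = stdNormalCDF (d + s) - Real.exp x * stdNormalCDF d := by
    rw [CBS, if_neg hσ.ne', hdp]
  have hint1 : Integrable (fun t => gpdf (t + s)) := gpdf_integrable.comp_add_right s
  have hint2 : Integrable (fun t => Real.exp x * gpdf t) := gpdf_integrable.const_mul _
  constructor
  · rw [hCBS, stdNormalCDF_eq, stdNormalCDF_eq, ← shift_Iic gpdf d s,
      ← integral_const_mul, ← integral_sub hint1.integrableOn hint2.integrableOn]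
    refine setIntegral_nonneg measurableSet_Iic fun t ht => ?_
    rw [sub_nonneg, gpdf_shift]
    refine mul_le_mul_of_nonneg_right (Real.exp_le_exp.2 ?_) (gpdf_pos t).le |>.trans
      (le_of_eq (mul_comm _ _))
    rw [hx]
    have : t * s ≤ d * s := mul_le_mul_of_nonneg_right ht hs.le
    linarith
  · rw [hCBS]
    have h1 : stdNormalCDF (d + s) = 1 - ∫ t in Set.Ioi d, gpdf (t + s) := by
      rw [shift_Ioi gpdf d s, eq_sub_iff_add_eq, stdNormalCDF_add_Ioi]
    have h2 : stdNormalCDF d = 1 - ∫ t in Set.Ioi d, gpdf t := by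
      rw [eq_sub_iff_add_eq, stdNormalCDF_add_Ioi]
    rw [h1, h2, mul_sub, mul_one]
    have key : 0 ≤ ∫ t in Set.Ioi d, (Real.exp x * gpdf t - gpdf (t + s)) := by
      refine setIntegral_nonneg measurableSet_Ioi fun t ht => ?_
      rw [sub_nonneg, gpdf_shift, mul_comm (gpdf t)]
      refine mul_le_mul_of_nonneg_right (Real.exp_le_exp.2 ?_) (gpdf_pos t).le
      rw [hx]
      have : d * s ≤ t * s := mul_le_mul_of_nonneg_right (le_of_lt ht) hs.le
      linarith
    rw [integral_sub hint2.integrableOn hint1.integrableOn, integral_const_mul] at key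
    linarith

lemma CBS_ge_max (T x σ : ℝ) (hT : 0 < T) (hσ : 0 ≤ σ) :
    max (1 - Real.exp x) 0 ≤ CBS T x σ := by
  rcases hσ.eq_or_lt with h | h
  · rw [CBS, if_pos h.symm]
  · exact max_le (CBS_pieces T x σ hT h).2 (CBS_pieces T x σ hT h).1


lemma CBS_continuousAt (T x σ₀ : ℝ) (hT : 0 < T) (hσ : 0 < σ₀) :
    ContinuousAt (fun σ => CBS T x σ) σ₀ := by
  have hsT : Real.sqrt T ≠ 0 := (Real.sqrt_pos.2 hT).ne'
  have hden : ContinuousAt (fun σ : ℝ => σ * Real.sqrt T) σ₀ :=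
    (continuous_id.mul continuous_const).continuousAt
  have hne : σ₀ * Real.sqrt T ≠ 0 := mul_ne_zero hσ.ne' hsT
  have hdp : ContinuousAt (fun σ => dplus T x σ) σ₀ := by
    unfold dplus
    exact ((continuousAt_const.div hden hne).add (hden.div_const 2))
  have hdm : ContinuousAt (fun σ => dminus T x σ) σ₀ := by
    unfold dminus
    exact ((continuousAt_const.div hden hne).sub (hden.div_const 2))
  have hform : ContinuousAt
      (fun σ => stdNormalCDF (dplus T x σ) - Real.exp x * stdNormalCDF (dminus T x σ)) σ₀ :=
    ((stdNormalCDF_continuous.continuousAt.comp hdp).sub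
      (continuousAt_const.mul (stdNormalCDF_continuous.continuousAt.comp hdm)))
  refine hform.congr ?_
  have : ∀ᶠ σ in 𝓝 σ₀, σ ≠ 0 :=
    eventually_ne_nhds hσ.ne'
  filter_upwards [this] with σ hσ'
  rw [CBS, if_neg hσ']

lemma CBS_tendsto_atTop (T x : ℝ) (hT : 0 < T) :
    Tendsto (fun σ => CBS T x σ) atTop (𝓝 1) := by
  have hsT : 0 < Real.sqrt T := Real.sqrt_pos.2 hT
  have hs : Tendsto (fun σ : ℝ => σ * Real.sqrt T) atTop atTop :=
    tendsto_id.atTop_mul_const hsT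
  have h0 : Tendsto (fun σ : ℝ => -x / (σ * Real.sqrt T)) atTop (𝓝 0) :=
    tendsto_const_nhds.div_atTop hs
  have hdp : Tendsto (fun σ => dplus T x σ) atTop atTop := by
    unfold dplus
    exact h0.add_atTop ((hs.atTop_div_const (by norm_num)))
  have hdm : Tendsto (fun σ => dminus T x σ) atTop atBot := by
    unfold dminus
    have : Tendsto (fun σ : ℝ => σ * Real.sqrt T / 2) atTop atTop :=
      hs.atTop_div_const (by norm_num)
    have hneg : Tendsto (fun σ : ℝ => -(σ * Real.sqrt T / 2)) atTop atBot :=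
      tendsto_neg_atTop_atBot.comp this
    exact (h0.add_atBot hneg).congr (fun σ => by ring)
  have := (stdNormalCDF_tendsto_atTop.comp hdp).sub
    ((stdNormalCDF_tendsto_atBot.comp hdm).const_mul (Real.exp x))
  rw [mul_zero, sub_zero] at this
  refine this.congr' ?_
  filter_upwards [eventually_gt_atTop (0:ℝ)] with σ hσ
  rw [CBS, if_neg hσ.ne']
  rfl

lemma CBS_small (T x C : ℝ) (hT : 0 < T) (hC : max (1 - Real.exp x) 0 < C) :
    ∀ᶠ σ in 𝓝[>] (0:ℝ), CBS T x σ < C := by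
  have hsT : 0 < Real.sqrt T := Real.sqrt_pos.2 hT
  have hsmall : Tendsto (fun σ : ℝ => σ * Real.sqrt T) (𝓝[>] 0) (𝓝[>] 0) := by
    rw [tendsto_nhdsWithin_iff]
    constructor
    · have := ((continuous_id.mul (continuous_const (y := Real.sqrt T))).tendsto 0).mono_left
        (nhdsWithin_le_nhds (s := Set.Ioi (0:ℝ)))
      simpa [Pi.mul_def] using this
    · filter_upwards [self_mem_nhdsWithin] with σ (hσ : (0:ℝ) < σ)
      exact Set.mem_Ioi.2 (mul_pos hσ hsT)
  have hsinv : Tendsto (fun σ : ℝ => (σ * Real.sqrt T)⁻¹) (𝓝[>] 0) atTop :=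
    tendsto_inv_nhdsGT_zero.comp hsmall
  have hs0 : Tendsto (fun σ : ℝ => σ * Real.sqrt T) (𝓝[>] 0) (𝓝 0) :=
    hsmall.mono_right nhdsWithin_le_nhds
  rcases lt_trichotomy x 0 with hx | hx | hx
  · -- x < 0
    have hmax : max (1 - Real.exp x) 0 = 1 - Real.exp x := by
      rw [max_eq_left]
      have := Real.exp_lt_one_iff.2 hx
      linarith
    rw [hmax] at hC
    have hdm : Tendsto (fun σ => dminus T x σ) (𝓝[>] 0) atTop := by
      unfold dminus
      have h1 : Tendsto (fun σ : ℝ => -x / (σ * Real.sqrt T)) (𝓝[>] 0) atTop := by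
        have := hsinv.const_mul_atTop (neg_pos.2 hx)
        exact this.congr fun σ => by rw [div_eq_mul_inv]
      have h2 : Tendsto (fun σ : ℝ => -(σ * Real.sqrt T / 2)) (𝓝[>] 0) (𝓝 0) := by
        have := (hs0.div_const 2).neg
        simpa using this
      exact (h2.add_atTop h1).congr fun σ => by ring
    have hN : Tendsto (fun σ => 1 - Real.exp x + (1 - stdNormalCDF (dminus T x σ)))
        (𝓝[>] 0) (𝓝 (1 - Real.exp x)) := by
      have := (tendsto_const_nhds (x := (1:ℝ))).sub (stdNormalCDF_tendsto_atTop.comp hdm)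
      rw [sub_self] at this
      have h2 := (tendsto_const_nhds (x := 1 - Real.exp x)).add this
      rw [add_zero] at h2
      exact h2
    have hev := hN.eventually (eventually_lt_nhds hC)
    filter_upwards [hev, self_mem_nhdsWithin] with σ h1 (h2 : (0:ℝ) < σ)
    refine lt_of_le_of_lt ?_ h1
    rw [CBS, if_neg h2.ne']
    have e1 : Real.exp x ≤ 1 := (Real.exp_lt_one_iff.2 hx).le
    have e2 : stdNormalCDF (dplus T x σ) ≤ 1 := stdNormalCDF_le_one _
    have e3 : stdNormalCDF (dminus T x σ) ≤ 1 := stdNormalCDF_le_one _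
    nlinarith [Real.exp_pos x, stdNormalCDF_nonneg (dminus T x σ)]
  · -- x = 0
    subst hx
    have hmax : max (1 - Real.exp 0) 0 = 0 := by simp
    rw [hmax] at hC
    have hdp : Tendsto (fun σ => dplus T 0 σ) (𝓝[>] 0) (𝓝 0) := by
      unfold dplus
      have := (tendsto_const_nhds (x := (0:ℝ))).add (hs0.div_const 2)
      simp only [neg_zero, zero_div, add_zero, zero_add] at this ⊢
      simpa using this
    have hdm : Tendsto (fun σ => dminus T 0 σ) (𝓝[>] 0) (𝓝 0) := by
      unfold dminus
      have := (tendsto_const_nhds (x := (0:ℝ))).sub (hs0.div_const 2)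
      simp only [neg_zero, zero_div, zero_sub] at this ⊢
      simpa using this
    have hCBS : Tendsto (fun σ => stdNormalCDF (dplus T 0 σ) -
        Real.exp 0 * stdNormalCDF (dminus T 0 σ)) (𝓝[>] 0) (𝓝 0) := by
      have := (stdNormalCDF_continuous.continuousAt.tendsto.comp hdp).sub
        ((stdNormalCDF_continuous.continuousAt.tendsto.comp hdm).const_mul (Real.exp 0))
      simpa using this
    have hev := hCBS.eventually (eventually_lt_nhds hC)
    filter_upwards [hev, self_mem_nhdsWithin] with σ h1 (h2 : (0:ℝ) < σ)
    rwa [CBS, if_neg h2.ne']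
  · -- x > 0
    have hmax : max (1 - Real.exp x) 0 = 0 := by
      rw [max_eq_right]
      nlinarith [Real.add_one_le_exp x]
    rw [hmax] at hC
    have hdp : Tendsto (fun σ => dplus T x σ) (𝓝[>] 0) atBot := by
      unfold dplus
      have h1 : Tendsto (fun σ : ℝ => -x / (σ * Real.sqrt T)) (𝓝[>] 0) atBot := by
        have := hsinv.const_mul_atTop_of_neg (neg_neg_iff_pos.2 hx)
        exact this.congr fun σ => by rw [div_eq_mul_inv]
      have h2 : Tendsto (fun σ : ℝ => σ * Real.sqrt T / 2) (𝓝[>] 0) (𝓝 0) := by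
        simpa using hs0.div_const 2
      exact (h2.add_atBot h1).congr fun σ => by ring
    have hN : Tendsto (fun σ => stdNormalCDF (dplus T x σ)) (𝓝[>] 0) (𝓝 0) :=
      stdNormalCDF_tendsto_atBot.comp hdp
    have hev := hN.eventually (eventually_lt_nhds hC)
    filter_upwards [hev, self_mem_nhdsWithin] with σ h1 (h2 : (0:ℝ) < σ)
    rw [CBS, if_neg h2.ne']
    have : 0 ≤ Real.exp x * stdNormalCDF (dminus T x σ) :=
      mul_nonneg (Real.exp_pos x).le (stdNormalCDF_nonneg _)
    linarith

lemma CBS_surj (T x C : ℝ) (hT : 0 < T) (hC1 : max (1 - Real.exp x) 0 ≤ C) (hC2 : C < 1) :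
    ∃ σ : ℝ, 0 ≤ σ ∧ CBS T x σ = C := by
  rcases hC1.eq_or_lt with h | h
  · exact ⟨0, le_refl 0, by rw [CBS, if_pos rfl, h]⟩
  · -- find small σ₀ with CBS < C
    have h0 : ∃ σ₀ : ℝ, 0 < σ₀ ∧ CBS T x σ₀ < C := by
      have := (CBS_small T x C hT h).and self_mem_nhdsWithin
      rcases this.exists with ⟨σ₀, h1, h2⟩
      exact ⟨σ₀, h2, h1⟩
    obtain ⟨σ₀, hσ₀, hCBS₀⟩ := h0
    have h1 : ∃ σ₁ : ℝ, σ₀ < σ₁ ∧ C < CBS T x σ₁ := by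
      have hev : ∀ᶠ σ in atTop, C < CBS T x σ :=
        (CBS_tendsto_atTop T x hT).eventually (eventually_gt_nhds hC2)
      rcases (hev.and (eventually_gt_atTop σ₀)).exists with ⟨σ₁, hh1, hh2⟩
      exact ⟨σ₁, hh2, hh1⟩
    obtain ⟨σ₁, hσ₀₁, hCBS₁⟩ := h1
    have hcont : ContinuousOn (fun σ => CBS T x σ) (Set.Icc σ₀ σ₁) := fun σ hσ =>
      (CBS_continuousAt T x σ hT (lt_of_lt_of_le hσ₀ hσ.1)).continuousWithinAt
    have := intermediate_value_Icc hσ₀₁.le hcont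
    have hmem : C ∈ Set.Icc (CBS T x σ₀) (CBS T x σ₁) := ⟨hCBS₀.le, hCBS₁.le⟩
    obtain ⟨σ, hσmem, hσeq⟩ := this hmem
    exact ⟨σ, (hσ₀.trans_le hσmem.1).le, hσeq⟩

/-- existence region of the implied volatility of the `α`-collateralised
Call, for `α ∈ [0,1)` and a strictly positive martingale defect `m`. -/
theorem alpha_collateralised_call_iv_existence_region
    {Ω : Type*} [MeasurableSpace Ω] (μ : Measure Ω) [IsProbabilityMeasure μ]
    (S : Ω → ℝ) (hS : ∀ ω, 0 ≤ S ω) (hSint : Integrable S μ)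
    (m : ℝ) (hm : m = 1 - ∫ ω, S ω ∂μ) (hm0 : 0 < m) (hm1 : m < 1)
    (T : ℝ) (hT : 0 < T) (α : ℝ) (hα : α ∈ Set.Ico (0:ℝ) 1) :
    ∃ xs : ℝ, xs ≤ 0 ∧
      Real.log ((1 - α) * m) < xs ∧ xs ≤ Real.log (1 - α * m) ∧
      (∀ x : ℝ, xs ≤ x →
        ∃ σ : ℝ, 0 ≤ σ ∧ CBS T x σ = (∫ ω, max (S ω - Real.exp x) 0 ∂μ) + α * m) ∧
      (∀ x : ℝ, x < xs →
        ¬ ∃ σ : ℝ, 0 ≤ σ ∧ CBS T x σ = (∫ ω, max (S ω - Real.exp x) 0 ∂μ) + α * m) := by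
  obtain ⟨hα0, hα1⟩ := hα
  have hSI : ∫ ω, S ω ∂μ = 1 - m := by rw [hm]; ring
  -- integrability facts
  have hmax_int : ∀ k : ℝ, Integrable (fun ω => max (S ω) k) μ := fun k =>
    hSint.sup (integrable_const k)
  have hP_int : ∀ k : ℝ, Integrable (fun ω => max (S ω - k) 0) μ := fun k =>
    (hSint.sub (integrable_const k)).sup (integrable_const 0)
  -- G and g
  set G : ℝ → ℝ := fun k => ∫ ω, max (S ω) k ∂μ with hG_def
  set g : ℝ → ℝ := fun x => G (Real.exp x) - 1 + α * m with hg_def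
  -- (i) P x + e^x = G(e^x)
  have hPG : ∀ x : ℝ, (∫ ω, max (S ω - Real.exp x) 0 ∂μ) + Real.exp x = G (Real.exp x) := by
    intro x
    rw [hG_def]
    have : ∀ ω, max (S ω) (Real.exp x) = max (S ω - Real.exp x) 0 + Real.exp x := by
      intro ω
      rcases le_total (S ω) (Real.exp x) with h | h
      · rw [max_eq_right h, max_eq_right (by linarith)]; ring
      · rw [max_eq_left h, max_eq_left (by linarith)]; ring
    simp only [this]
    rw [integral_add (hP_int _) (integrable_const _), integral_const]
    simp
  -- G monotone
  have hG_mono : Monotone G := fun a b hab =>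
    integral_mono (hmax_int a) (hmax_int b) fun ω => max_le_max le_rfl hab
  -- G k ≥ k
  have hG_ge : ∀ k : ℝ, k ≤ G k := by
    intro k
    have : (∫ _ : Ω, k ∂μ) ≤ G k :=
      integral_mono (integrable_const k) (hmax_int k) fun ω => le_max_right _ _
    simpa using this
  -- G Lipschitz hence continuous
  have hG_lip : ∀ a b : ℝ, |G a - G b| ≤ |a - b| := by
    intro a b
    rw [hG_def]
    rw [← integral_sub (hmax_int a) (hmax_int b)]
    calc |∫ ω, (max (S ω) a - max (S ω) b) ∂μ|
        ≤ ∫ ω, |max (S ω) a - max (S ω) b| ∂μ := by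
          simpa [Real.norm_eq_abs] using
            norm_integral_le_integral_norm (fun ω => max (S ω) a - max (S ω) b) (μ := μ)
      _ ≤ ∫ _ : Ω, |a - b| ∂μ := by
          refine integral_mono ((hmax_int a).sub (hmax_int b)).abs (integrable_const _) ?_
          intro ω
          calc |max (S ω) a - max (S ω) b| = |max a (S ω) - max b (S ω)| := by
                rw [max_comm (S ω) a, max_comm (S ω) b]
            _ ≤ |a - b| := abs_max_sub_max_le_abs a b (S ω)
      _ = |a - b| := by simp
  have hG_cont : Continuous G := by
    refine LipschitzWith.continuous (K := 1) ?_
    refine LipschitzWith.of_dist_le_mul fun a b => ?_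
    rw [Real.dist_eq, Real.dist_eq]
    simpa using hG_lip a b
  have hg_cont : Continuous g := by
    rw [hg_def]
    exact ((hG_cont.comp Real.continuous_exp).sub continuous_const).add continuous_const
  have hg_mono : Monotone g := fun a b hab => by
    simp only [hg_def]
    have := hG_mono (Real.exp_le_exp.2 hab)
    linarith
  -- strict bound: G k < (1 - m) + k for k > 0
  have hG_lt : ∀ k : ℝ, 0 < k → G k < (1 - m) + k := by
    intro k hk
    have hmin_eq : (fun ω => min (S ω) k) = fun ω => S ω + k - max (S ω) k := by
      funext ω
      have := min_add_max (S ω) k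
      linarith
    have hmin_int : Integrable (fun ω => min (S ω) k) μ := by
      rw [hmin_eq]
      exact (hSint.add (integrable_const k)).sub (hmax_int k)
    have hmin_nonneg : ∀ ω, 0 ≤ min (S ω) k := fun ω => le_min (hS ω) hk.le
    have hmin_pos : 0 < ∫ ω, min (S ω) k ∂μ := by
      rcases (integral_nonneg (f := fun ω => min (S ω) k) hmin_nonneg).eq_or_lt with h | h
      · exfalso
        have hae : (fun ω => min (S ω) k) =ᵐ[μ] 0 :=
          (integral_eq_zero_iff_of_nonneg hmin_nonneg hmin_int).1 h.symm
        have hSae : S =ᵐ[μ] 0 := by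
          filter_upwards [hae] with ω hω
          have : min (S ω) k = 0 := hω
          rcases min_eq_iff.1 this with ⟨h1, -⟩ | ⟨h1, h2⟩
          · exact h1
          · linarith
        have : ∫ ω, S ω ∂μ = 0 := by
          rw [integral_congr_ae hSae]; simp
        rw [hSI] at this; linarith
      · exact h
    have hsum : (∫ ω, min (S ω) k ∂μ) = (1 - m) + k - G k := by
      have h1 : Integrable (fun ω => S ω + k) μ := hSint.add (integrable_const k)
      rw [hmin_eq, integral_sub h1 (hmax_int k), integral_add hSint (integrable_const k),
        hSI, integral_const]
      simp [hG_def]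
    linarith [hsum ▸ hmin_pos]
  -- the set A and xs
  set A : Set ℝ := {x | 0 ≤ g x} with hA_def
  have hA_closed : IsClosed A := isClosed_le continuous_const hg_cont
  have hαm : α * m < 1 := lt_of_le_of_lt (by nlinarith) hα1
  have hx₁pos : 0 < 1 - α * m := by linarith
  have hx₁mem : Real.log (1 - α * m) ∈ A := by
    simp only [hA_def, Set.mem_setOf_eq, hg_def]
    rw [Real.exp_log hx₁pos]
    have := hG_ge (1 - α * m)
    linarith
  have hLpos : 0 < (1 - α) * m := mul_pos (by linarith) hm0
  have hgL : g (Real.log ((1 - α) * m)) < 0 := by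
    simp only [hg_def]
    rw [Real.exp_log hLpos]
    have := hG_lt ((1 - α) * m) hLpos
    nlinarith
  set L := Real.log ((1 - α) * m) with hL_def
  have hLlb : ∀ x ∈ A, L ≤ x := by
    intro x hx
    by_contra h
    push_neg at h
    have : g x ≤ g L := hg_mono h.le
    have hx' : 0 ≤ g x := hx
    linarith
  have hbdd : BddBelow A := ⟨L, hLlb⟩
  have hAne : A.Nonempty := ⟨_, hx₁mem⟩
  set xs := sInf A with hxs_def
  have hxs_mem : xs ∈ A := hA_closed.csInf_mem hAne hbdd
  have hxs_le : xs ≤ Real.log (1 - α * m) := csInf_le hbdd hx₁mem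
  have hxs_le0 : xs ≤ 0 := by
    refine hxs_le.trans (Real.log_nonpos hx₁pos.le (by nlinarith))
  have hLxs : L < xs := by
    have hopen : IsOpen {y : ℝ | g y < 0} := isOpen_lt hg_cont continuous_const
    obtain ⟨ε, hε, hball⟩ := Metric.isOpen_iff.1 hopen L hgL
    have hlb2 : ∀ x ∈ A, L + ε / 2 ≤ x := by
      intro x hx
      by_contra h
      push_neg at h
      have hgx : 0 ≤ g x := hx
      rcases le_or_gt x L with h2 | h2
      · have := hg_mono h2
        linarith
      · have : x ∈ Metric.ball L ε := by
          rw [Metric.mem_ball, Real.dist_eq, abs_of_pos (by linarith)]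
          linarith
        exact absurd (hball this) (by simpa using hgx)
    have := le_csInf hAne hlb2
    linarith
  -- bounds on price
  have hP_nonneg : ∀ x : ℝ, 0 ≤ ∫ ω, max (S ω - Real.exp x) 0 ∂μ := fun x =>
    integral_nonneg fun ω => le_max_right _ _
  have hP_le : ∀ x : ℝ, (∫ ω, max (S ω - Real.exp x) 0 ∂μ) ≤ 1 - m := by
    intro x
    rw [← hSI]
    refine integral_mono (hP_int _) hSint fun ω => ?_
    refine max_le (by linarith [(Real.exp_pos x).le]) (hS ω)
  have hC_lt_one : ∀ x : ℝ, (∫ ω, max (S ω - Real.exp x) 0 ∂μ) + α * m < 1 := by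
    intro x
    have := hP_le x
    nlinarith
  refine ⟨xs, hxs_le0, hLxs, hxs_le, ?_, ?_⟩
  · intro x hx
    refine CBS_surj T x _ hT ?_ (hC_lt_one x)
    have hgxs : 0 ≤ g xs := hxs_mem
    have hgx : 0 ≤ g x := le_trans hgxs (hg_mono hx)
    have hPx := hPG x
    simp only [hg_def] at hgx
    refine max_le (by linarith) ?_
    have := hP_nonneg x
    nlinarith
  · intro x hx ⟨σ, hσ, heq⟩
    have hgx : g x < 0 := by
      by_contra h
      push_neg at h
      exact absurd (csInf_le hbdd (show x ∈ A from h)) (not_le.2 hx)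
    have hx0 : x < 0 := lt_of_lt_of_le hx hxs_le0
    have hmax : max (1 - Real.exp x) 0 = 1 - Real.exp x := by
      rw [max_eq_left]
      have := Real.exp_lt_one_iff.2 hx0
      linarith
    have hge := CBS_ge_max T x σ hT hσ
    rw [hmax, heq] at hge
    have hPx := hPG x
    simp only [hg_def] at hgx
    linarith
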